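/- arXiv:1307.4502 — 3 statements merged into one kernel-verified Lean document; each statement's English description precedes it below -/
import Mathlib

section
/- Let A be an m×n real matrix, x ∈ ℝⁿ, K ⊆ {1,...,n} with complement K̄, and C > 1. Suppose for every w in the null space of A we have ‖x_K + w_K‖₁ + (1/C)‖w_{K̄}‖₁ ≥ ‖x_K‖₁. Then any minimizer x̂ of ‖z‖₁ subject to Az = Ax satisfies ‖x_K‖₁ − ‖x̂_K‖₁ ≤ (2/(C−1))‖x_{K̄}‖₁. -/
noncomputable def l1 {n : ℕ} (x : Fin n → ℝ) : ℝ := ∑ i, |x i|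

def restr {n : ℕ} (x : Fin n → ℝ) (S : Finset (Fin n)) : Fin n → ℝ :=
  fun i => if i ∈ S then x i else 0

lemma l1_nonneg {n : ℕ} (x : Fin n → ℝ) : 0 ≤ l1 x :=
  Finset.sum_nonneg fun i _ => abs_nonneg _

lemma l1_restr_eq {n : ℕ} (x : Fin n → ℝ) (S : Finset (Fin n)) :
    l1 (restr x S) = ∑ i ∈ S, |x i| := by
  unfold l1 restr
  rw [← Finset.sum_subset (Finset.subset_univ S)]
  · exact Finset.sum_congr rfl fun i hi => by simp [hi]
  · intro i _ hi; simp [hi]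

lemma l1_split {n : ℕ} (x : Fin n → ℝ) (S : Finset (Fin n)) :
    l1 x = l1 (restr x S) + l1 (restr x Sᶜ) := by
  rw [l1_restr_eq, l1_restr_eq, Finset.sum_add_sum_compl]
  rfl

lemma l1_sub_le {n : ℕ} (a b : Fin n → ℝ) (S : Finset (Fin n)) :
    l1 (restr (a - b) S) ≤ l1 (restr a S) + l1 (restr b S) := by
  rw [l1_restr_eq, l1_restr_eq, l1_restr_eq, ← Finset.sum_add_distrib]
  exact Finset.sum_le_sum fun i _ => abs_sub _ _

theorem stmt_0 {m n : ℕ} (A : Matrix (Fin m) (Fin n) ℝ) (x : Fin n → ℝ)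
    (K : Finset (Fin n)) (C : ℝ) (hC : 1 < C)
    (hns : ∀ w : Fin n → ℝ, A.mulVec w = 0 →
      l1 (restr x K + restr w K) + (1 / C) * l1 (restr w Kᶜ) ≥ l1 (restr x K))
    (xhat : Fin n → ℝ) (hfeas : A.mulVec xhat = A.mulVec x)
    (hmin : ∀ z : Fin n → ℝ, A.mulVec z = A.mulVec x → l1 xhat ≤ l1 z) :
    l1 (restr x K) - l1 (restr xhat K) ≤ (2 / (C - 1)) * l1 (restr x Kᶜ) := by
  have hw : A.mulVec (xhat - x) = 0 := by
    rw [Matrix.mulVec_sub, hfeas, sub_self]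
  have hkey := hns (xhat - x) hw
  have hrw : restr x K + restr (xhat - x) K = restr xhat K := by
    funext i; simp [restr]; split <;> simp
  rw [hrw] at hkey
  have hmin' := hmin x rfl
  rw [l1_split x K, l1_split xhat K] at hmin'
  have htri := l1_sub_le xhat x Kᶜ
  have hC0 : 0 < C := lt_trans one_pos hC
  have hC1 : 0 < C - 1 := by linarith
  set D := l1 (restr x K) - l1 (restr xhat K) with hD
  set t := l1 (restr x Kᶜ) with ht
  have htn : 0 ≤ t := l1_nonneg _
  -- from hkey: D ≤ (1/C) * l1 (restr (xhat - x) Kᶜ)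
  have h1 : D ≤ (1 / C) * l1 (restr (xhat - x) Kᶜ) := by
    have := hkey; simp only [ge_iff_le] at this; linarith
  have h2 : l1 (restr xhat Kᶜ) ≤ D + t := by linarith
  have h3 : l1 (restr (xhat - x) Kᶜ) ≤ D + 2 * t := by linarith
  have h4 : D ≤ (1 / C) * (D + 2 * t) := by
    calc D ≤ (1 / C) * l1 (restr (xhat - x) Kᶜ) := h1
      _ ≤ (1 / C) * (D + 2 * t) := by
          apply mul_le_mul_of_nonneg_left h3 (by positivity)
  rw [div_mul_eq_mul_div, le_div_iff₀ hC1]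
  have := mul_le_mul_of_nonneg_left h4 hC0.le
  rw [← mul_assoc, mul_one_div, div_self hC0.ne', one_mul] at this
  nlinarith
end

section
/- Let A be an m×n real matrix, L ⊆ {1,...,n}, ω ≥ 1, and x ∈ ℝⁿ with support contained in L. If for every nonzero w in the null space of A we have ‖w_{L̄}‖₁ > ‖w_L‖₁ / ω, then x is the unique minimizer of ‖z_L‖₁ + ω‖z_{L̄}‖₁ subject to Az = Ax. -/
theorem stmt_5 {m n : ℕ} (A : Matrix (Fin m) (Fin n) ℝ) (L : Finset (Fin n))
    (ω : ℝ) (hω : 1 ≤ ω) (x : Fin n → ℝ) (hsupp : ∀ i, x i ≠ 0 → i ∈ L)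
    (hns : ∀ w : Fin n → ℝ, A.mulVec w = 0 → w ≠ 0 →
      l1 (restr w Lᶜ) > l1 (restr w L) / ω) :
    ∀ z : Fin n → ℝ, A.mulVec z = A.mulVec x → z ≠ x →
      l1 (restr x L) + ω * l1 (restr x Lᶜ) < l1 (restr z L) + ω * l1 (restr z Lᶜ) := by
  intro z hAz hzx
  set w : Fin n → ℝ := z - x with hw
  have hAw : A.mulVec w = 0 := by
    simp [hw, Matrix.mulVec_sub, hAz]
  have hwne : w ≠ 0 := sub_ne_zero.mpr hzx
  have hgt := hns w hAw hwne
  have hωpos : (0:ℝ) < ω := lt_of_lt_of_le one_pos hω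
  have hkey : l1 (restr w L) < ω * l1 (restr w Lᶜ) := by
    rw [gt_iff_lt, div_lt_iff₀ hωpos] at hgt
    linarith
  have hxc : ∀ i, i ∉ L → x i = 0 := fun i hi => by
    by_contra h; exact hi (hsupp i h)
  have hx0 : l1 (restr x Lᶜ) = 0 := by
    unfold l1 restr
    refine Finset.sum_eq_zero fun i _ => ?_
    by_cases h : i ∈ Lᶜ
    · simp [h, hxc i (Finset.mem_compl.mp h)]
    · simp [h]
  have hzc : restr z Lᶜ = restr w Lᶜ := by
    funext i
    by_cases h : i ∈ Lᶜ
    · simp [restr, h, hw, hxc i (Finset.mem_compl.mp h)]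
    · simp [restr, h]
  have htri : l1 (restr x L) ≤ l1 (restr z L) + l1 (restr w L) := by
    unfold l1
    rw [← Finset.sum_add_distrib]
    refine Finset.sum_le_sum fun i _ => ?_
    by_cases h : i ∈ L
    · have : restr x L i = restr z L i - restr w L i := by
        simp [restr, h, hw]
      rw [this]
      exact abs_sub _ _
    · simp [restr, h]
  rw [hzc, hx0]
  linarith
end

section
/- Let ω > 1, L ⊆ {1,...,n}, and let A be an m×n matrix such that for every nonzero w ∈ ker A: ω‖w_{L̄ ∩ S̄}‖₁ > ‖w_L‖₁ + ω‖w_{L̄ ∩ S}‖₁ for every S ⊆ L̄ with |S| ≤ s. Then every vector x whose support is contained in L ∪ S for some S ⊆ L̄ with |S| ≤ s is the unique minimizer of ‖z_L‖₁ + ω‖z_{L̄}‖₁ subject to Az = Ax. -/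
lemma l1_restr {n : ℕ} (v : Fin n → ℝ) (T : Finset (Fin n)) :
    l1 (restr v T) = ∑ i, if i ∈ T then |v i| else 0 := by
  unfold l1 restr
  simp [apply_ite abs]

lemma l1_restr_split {n : ℕ} (v : Fin n → ℝ) (L S : Finset (Fin n)) :
    l1 (restr v Lᶜ) = l1 (restr v (Lᶜ ∩ S)) + l1 (restr v (Lᶜ ∩ Sᶜ)) := by
  simp only [l1_restr]
  rw [← Finset.sum_add_distrib]
  apply Finset.sum_congr rfl
  intro i _
  by_cases hL : i ∈ Lᶜ <;> by_cases hSi : i ∈ S <;> simp [hL, hSi, Finset.mem_compl]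

lemma l1_restr_tri {n : ℕ} (x z : Fin n → ℝ) (T : Finset (Fin n)) :
    l1 (restr x T) - l1 (restr (z - x) T) ≤ l1 (restr z T) := by
  simp only [l1_restr]
  rw [← Finset.sum_sub_distrib]
  apply Finset.sum_le_sum
  intro i _
  by_cases h : i ∈ T
  · simp only [h, if_true, Pi.sub_apply]
    have h1 := abs_sub_abs_le_abs_sub (x i) (z i)
    have h2 : |x i - z i| = |z i - x i| := abs_sub_comm _ _
    linarith
  · simp [h]

theorem stmt_13 {m n : ℕ} (A : Matrix (Fin m) (Fin n) ℝ) (L : Finset (Fin n))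
    (ω : ℝ) (hω : 1 < ω) (s : ℕ)
    (hns : ∀ w : Fin n → ℝ, A.mulVec w = 0 → w ≠ 0 →
      ∀ S : Finset (Fin n), S ⊆ Lᶜ → S.card ≤ s →
        ω * l1 (restr w (Lᶜ ∩ Sᶜ)) > l1 (restr w L) + ω * l1 (restr w (Lᶜ ∩ S))) :
    ∀ (x : Fin n → ℝ) (S : Finset (Fin n)), S ⊆ Lᶜ → S.card ≤ s →
      (∀ i, x i ≠ 0 → i ∈ L ∪ S) →
      ∀ z : Fin n → ℝ, A.mulVec z = A.mulVec x → z ≠ x →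
        l1 (restr x L) + ω * l1 (restr x Lᶜ) <
          l1 (restr z L) + ω * l1 (restr z Lᶜ) := by
  intro x S hS hcard hsupp z hAz hne
  set w : Fin n → ℝ := z - x with hw
  have hAw : A.mulVec w = 0 := by
    simp [hw, Matrix.mulVec_sub, hAz]
  have hw0 : w ≠ 0 := by
    intro h
    apply hne
    funext i
    have := congrFun h i
    simpa [hw, sub_eq_zero] using this
  have key := hns w hAw hw0 S hS hcard
  have hω0 : (0:ℝ) < ω := by linarith
  -- x vanishes off L ∪ S
  have hx0 : ∀ i : Fin n, i ∈ Lᶜ ∩ Sᶜ → x i = 0 := by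
    intro i hi
    by_contra hxi
    have := hsupp i hxi
    rcases Finset.mem_union.mp this with h | h
    · exact (Finset.mem_compl.mp (Finset.mem_inter.mp hi).1) h
    · exact (Finset.mem_compl.mp (Finset.mem_inter.mp hi).2) h
  have hzw : restr z (Lᶜ ∩ Sᶜ) = restr w (Lᶜ ∩ Sᶜ) := by
    funext i
    unfold restr
    by_cases h : i ∈ Lᶜ ∩ Sᶜ
    · simp [h, hw, hx0 i h]
    · simp [h]
  have hx0' : restr x (Lᶜ ∩ Sᶜ) = 0 := by
    funext i
    unfold restr
    by_cases h : i ∈ Lᶜ ∩ Sᶜ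
    · simp [h, hx0 i h]
    · simp [h]
  have hxS : l1 (restr x (Lᶜ ∩ Sᶜ)) = 0 := by
    rw [hx0']; unfold l1; simp
  have hzS : l1 (restr z (Lᶜ ∩ Sᶜ)) = l1 (restr w (Lᶜ ∩ Sᶜ)) := by rw [hzw]
  have tri1 := l1_restr_tri x z L
  have tri2 := l1_restr_tri x z (Lᶜ ∩ S)
  have tri2' : ω * (l1 (restr x (Lᶜ ∩ S)) - l1 (restr w (Lᶜ ∩ S))) ≤
      ω * l1 (restr z (Lᶜ ∩ S)) := by
    apply mul_le_mul_of_nonneg_left _ hω0.le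
    simpa [hw] using tri2
  have splitx : ω * l1 (restr x Lᶜ) =
      ω * l1 (restr x (Lᶜ ∩ S)) + ω * l1 (restr x (Lᶜ ∩ Sᶜ)) := by
    rw [l1_restr_split x L S]; ring
  have splitz : ω * l1 (restr z Lᶜ) =
      ω * l1 (restr z (Lᶜ ∩ S)) + ω * l1 (restr z (Lᶜ ∩ Sᶜ)) := by
    rw [l1_restr_split z L S]; ring
  have tri1' : l1 (restr x L) - l1 (restr w L) ≤ l1 (restr z L) := by
    simpa [hw] using tri1
  have hωzS : ω * l1 (restr z (Lᶜ ∩ Sᶜ)) = ω * l1 (restr w (Lᶜ ∩ Sᶜ)) := by rw [hzS]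
  nlinarith [key, tri1', tri2', splitx, splitz, hxS, hωzS]
end
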